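/- Let Q be n×n symmetric positive semidefinite, R m×m symmetric positive definite, Y m×m symmetric positive definite, λ ∈ (0,1], S an n×n symmetric positive definite matrix and X = S⁻¹. Then g_{λ,R+Y⁻¹}(X) ≤ X if and only if the 2×2 block matrix [[X − (1−λ) A X Aᵀ − Q, √λ A], [√λ Aᵀ, S + Cᵀ (R + Y⁻¹)⁻¹ C]] is positive semidefinite. (Schur-complement reformulation, equation (24) in the proof of Theorem 2.) -/

import Mathlib

open Matrix

/-- The modified Riccati operator
`g_{θ,W}(X) = A X Aᵀ + Q − θ A X Cᵀ (C X Cᵀ + W)⁻¹ C X Aᵀ`. -/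
noncomputable def gRic {n m : ℕ} (A Q : Matrix (Fin n) (Fin n) ℝ)
    (C : Matrix (Fin m) (Fin n) ℝ) (W : Matrix (Fin m) (Fin m) ℝ) (θ : ℝ)
    (X : Matrix (Fin n) (Fin n) ℝ) : Matrix (Fin n) (Fin n) ℝ :=
  A * X * Aᵀ + Q - θ • (A * X * Cᵀ * (C * X * Cᵀ + W)⁻¹ * (C * X * Aᵀ))

/-- Schur-complement reformulation (equation (24) in the proof of Theorem 2):
with `X = S⁻¹`, the inequality `g_{λ,R+Y⁻¹}(X) ≤ X` holds iff the block matrix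
`[[X − (1−λ)AXAᵀ − Q, √λ A], [√λ Aᵀ, S + Cᵀ(R+Y⁻¹)⁻¹C]]` is positive
semidefinite. -/
theorem gRic_le_iff_schur_block {n m : ℕ}
    (A Q : Matrix (Fin n) (Fin n) ℝ) (C : Matrix (Fin m) (Fin n) ℝ)
    (R Y : Matrix (Fin m) (Fin m) ℝ) (lam : ℝ)
    (hQ : Q.PosSemidef) (hR : R.PosDef) (hY : Y.PosDef)
    (hlam : lam ∈ Set.Ioc (0 : ℝ) 1)
    (S X : Matrix (Fin n) (Fin n) ℝ) (hS : S.PosDef) (hX : X = S⁻¹) :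
    (X - gRic A Q C (R + Y⁻¹) lam X).PosSemidef ↔
      (Matrix.fromBlocks
        (X - (1 - lam) • (A * X * Aᵀ) - Q) (Real.sqrt lam • A)
        (Real.sqrt lam • Aᵀ) (S + Cᵀ * (R + Y⁻¹)⁻¹ * C)).PosSemidef := by
  obtain ⟨hlam0, _⟩ := hlam
  set W := R + Y⁻¹ with hWdef
  have hWpd : W.PosDef := hR.add_posSemidef hY.inv.posSemidef
  have hCWC : (Cᵀ * W⁻¹ * C).PosSemidef := by
    have h := hWpd.inv.posSemidef.conjTranspose_mul_mul_same C
    simpa using h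
  have hD : (S + Cᵀ * W⁻¹ * C).PosDef := hS.add_posSemidef hCWC
  haveI : Invertible (S + Cᵀ * W⁻¹ * C) := hD.isUnit.invertible
  have hCXC : (W + C * X * Cᵀ).PosDef := by
    apply hWpd.add_posSemidef
    have h := (hX ▸ hS.inv.posSemidef).mul_mul_conjTranspose_same C
    simpa [Matrix.mul_assoc] using h
  -- Woodbury identity
  have hwood : (S + Cᵀ * W⁻¹ * C)⁻¹ = X - X * Cᵀ * (C * X * Cᵀ + W)⁻¹ * (C * X) := by
    have h := Matrix.add_mul_mul_inv_eq_sub S Cᵀ W⁻¹ C hS.isUnit hWpd.inv.isUnit (by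
      rw [Matrix.nonsing_inv_nonsing_inv _ (Matrix.isUnit_iff_isUnit_det _ |>.1 hWpd.isUnit),
        ← hX]
      exact hCXC.isUnit)
    rw [Matrix.nonsing_inv_nonsing_inv _ (Matrix.isUnit_iff_isUnit_det _ |>.1 hWpd.isUnit),
      ← hX] at h
    rw [h, add_comm W (C * X * Cᵀ), Matrix.mul_assoc]
  have hsq : Real.sqrt lam * Real.sqrt lam = lam := Real.mul_self_sqrt hlam0.le
  have key : X - gRic A Q C W lam X
      = (X - (1 - lam) • (A * X * Aᵀ) - Q)
        - (Real.sqrt lam • A) * (S + Cᵀ * W⁻¹ * C)⁻¹ * (Real.sqrt lam • Aᵀ) := by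
    rw [hwood]
    simp only [gRic, Matrix.smul_mul, Matrix.mul_smul, smul_smul, hsq, mul_sub, sub_mul,
      sub_smul, one_smul, smul_sub]
    simp only [Matrix.mul_assoc]
    abel
  rw [key]
  have hBH : (Real.sqrt lam • Aᵀ) = (Real.sqrt lam • A)ᴴ := by
    rw [conjTranspose_smul]
    simp [Matrix.conjTranspose_eq_transpose_of_trivial]
  rw [hBH]
  exact (Matrix.PosDef.fromBlocks₂₂ _ _ hD).symm
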